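/- The number of partitions of n in which no part has multiplicity 1, 2, or 5 equals the number of partitions of n into parts congruent to 0, 3, 4, 6, 8, or 9 modulo 12. -/

import Mathlib

open scoped Classical

/-- Number of partitions of `n` whose part multiplicities all lie in `A`. -/
noncomputable def partP (A : Set ℕ) (n : ℕ) : ℕ :=
  (Finset.univ.filter (fun p : Nat.Partition n =>
    ∀ i ∈ p.parts, Multiset.count i p.parts ∈ A)).card

/-- Number of partitions of `n` whose parts all lie in `B`. -/
noncomputable def partQ (B : Set ℕ) (n : ℕ) : ℕ :=
  (Finset.univ.filter (fun p : Nat.Partition n => ∀ i ∈ p.parts, i ∈ B)).card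

open PowerSeries

namespace MacMahonAux

noncomputable section

variable {α : Type*}

open Finset

def indicatorSeries (α : Type*) [Semiring α] (s : Set ℕ) : PowerSeries α :=
  PowerSeries.mk fun n => if n ∈ s then 1 else 0

theorem coeff_indicator (s : Set ℕ) [Semiring α] (n : ℕ) :
    coeff (R := α) n (indicatorSeries _ s) = if n ∈ s then 1 else 0 :=
  coeff_mk _ _

theorem coeff_indicator_pos (s : Set ℕ) [Semiring α] (n : ℕ) (h : n ∈ s) :
    coeff (R := α) n (indicatorSeries _ s) = 1 := by rw [coeff_indicator, if_pos h]

theorem coeff_indicator_neg (s : Set ℕ) [Semiring α] (n : ℕ) (h : n ∉ s) :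
    coeff (R := α) n (indicatorSeries _ s) = 0 := by rw [coeff_indicator, if_neg h]

theorem constantCoeff_indicator (s : Set ℕ) [Semiring α] :
    constantCoeff (R := α) (indicatorSeries _ s) = if 0 ∈ s then 1 else 0 :=
  rfl

theorem two_series (i : ℕ) [Semiring α] :
    1 + (X : PowerSeries α) ^ i.succ = indicatorSeries α {0, i.succ} := by
  ext n
  simp only [coeff_indicator, coeff_one, coeff_X_pow, Set.mem_insert_iff, Set.mem_singleton_iff,
    map_add]
  cases' n with d
  · simp [(Nat.succ_ne_zero i).symm]
  · simp [Nat.succ_ne_zero d]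

theorem num_series' [Field α] (i : ℕ) :
    (1 - (X : PowerSeries α) ^ (i + 1))⁻¹ = indicatorSeries α {k | i + 1 ∣ k} := by
  rw [PowerSeries.inv_eq_iff_mul_eq_one]
  · ext n
    cases n with
    | zero => simp [mul_sub, zero_pow, constantCoeff_indicator]
    | succ n =>
      simp only [coeff_one, if_false, mul_sub, mul_one, coeff_indicator,
        LinearMap.map_sub, reduceCtorEq]
      simp_rw [coeff_mul, coeff_X_pow, coeff_indicator, @boole_mul _ _ _ _]
      erw [@sum_ite _ _ _ _ _ (fun _ => Classical.propDecidable _), sum_ite]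
      simp_rw [@filter_filter _ _ _ _ _, sum_const_zero, add_zero, sum_const, nsmul_eq_mul, mul_one,
        sub_eq_iff_eq_add, zero_add]
      symm
      split_ifs with h
      · suffices #{a ∈ antidiagonal (n + 1) | i + 1 ∣ a.fst ∧ a.snd = i + 1} = 1 by
          simp only [Set.mem_setOf_eq]; convert congr_arg ((↑) : ℕ → α) this; norm_cast
        rw [card_eq_one]
        cases' h with p hp
        refine ⟨((i + 1) * (p - 1), i + 1), ?_⟩
        ext ⟨a₁, a₂⟩
        simp only [mem_filter, Prod.mk.injEq, Finset.HasAntidiagonal.mem_antidiagonal, mem_singleton]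
        constructor
        · rintro ⟨a_left, ⟨a, rfl⟩, rfl⟩
          refine ⟨?_, rfl⟩
          rw [Nat.mul_sub_left_distrib, ← hp, ← a_left, mul_one, Nat.add_sub_cancel]
        · rintro ⟨rfl, rfl⟩
          match p with
          | 0 => rw [mul_zero] at hp; cases hp
          | p + 1 => rw [hp]; simp [mul_add]
      · suffices #{a ∈ antidiagonal (n + 1) | i + 1 ∣ a.fst ∧ a.snd = i + 1} = 0 by
          simp only [Set.mem_setOf_eq]; convert congr_arg ((↑) : ℕ → α) this; norm_cast
        rw [card_eq_zero]
        apply eq_empty_of_forall_notMem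
        simp only [Prod.forall, mem_filter, not_and, Finset.HasAntidiagonal.mem_antidiagonal]
        rintro _ h₁ h₂ ⟨a, rfl⟩ rfl
        apply h
        simp [← h₂]
  · simp [zero_pow]

def mkOdd : ℕ ↪ ℕ :=
  ⟨fun i => 2 * i + 1, fun x y h => by linarith⟩

-- The main workhorse of the partition theorem proof.
theorem partialGF_prop (α : Type*) [CommSemiring α] (n : ℕ) (s : Finset ℕ) (hs : ∀ i ∈ s, 0 < i)
    (c : ℕ → Set ℕ) (hc : ∀ i, i ∉ s → 0 ∈ c i) :
    #{p : n.Partition | (∀ j, p.parts.count j ∈ c j) ∧ ∀ j ∈ p.parts, j ∈ s} =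
      coeff (R := α) n (∏ i ∈ s, indicatorSeries α ((· * i) '' c i)) := by
  simp_rw [coeff_prod, coeff_indicator, prod_boole, sum_boole]
  apply congr_arg
  simp only [mem_univ, forall_true_left, not_and, not_forall, exists_prop,
    Set.mem_image, not_exists]
  set φ : (a : Nat.Partition n) →
    a ∈ filter (fun p ↦ (∀ (j : ℕ), Multiset.count j p.parts ∈ c j) ∧ ∀ j ∈ p.parts, j ∈ s) univ →
    ℕ →₀ ℕ := fun p _ => {
      toFun := fun i => Multiset.count i p.parts • i
      support := Finset.filter (fun i => i ≠ 0) p.parts.toFinset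
      mem_support_toFun := fun a => by
        simp only [smul_eq_mul, ne_eq, mul_eq_zero, Multiset.count_eq_zero]
        rw [not_or, not_not]
        simp only [Multiset.mem_toFinset, not_not, mem_filter] }
  refine Finset.card_bij φ ?_ ?_ ?_
  · intro a ha
    simp only [φ, not_forall, not_exists, not_and, exists_prop, mem_filter]
    rw [mem_finsuppAntidiag]
    dsimp only [ne_eq, smul_eq_mul, id_eq, eq_mpr_eq_cast, le_eq_subset, Finsupp.coe_mk]
    simp only [mem_univ, forall_true_left, not_and, not_forall, exists_prop,
      mem_filter, true_and] at ha
    refine ⟨⟨?_, fun i ↦ ?_⟩, fun i _ ↦ ⟨a.parts.count i, ha.1 i, rfl⟩⟩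
    · conv_rhs => simp [← a.parts_sum]
      rw [sum_multiset_count_of_subset _ s]
      · simp only [smul_eq_mul]
      · intro i
        simp only [Multiset.mem_toFinset, not_not, mem_filter]
        apply ha.2
    · simp only [ne_eq, Multiset.mem_toFinset, not_not, mem_filter, and_imp]
      exact fun hi _ ↦ ha.2 i hi
  · intro p₁ hp₁ p₂ hp₂ h
    apply Nat.Partition.ext
    simp only [true_and, mem_univ, mem_filter] at hp₁ hp₂
    ext i
    simp only [φ, ne_eq, Multiset.mem_toFinset, not_not, smul_eq_mul, Finsupp.mk.injEq] at h
    by_cases hi : i = 0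
    · rw [hi]
      rw [Multiset.count_eq_zero_of_notMem]
      · rw [Multiset.count_eq_zero_of_notMem]
        intro a; exact Nat.lt_irrefl 0 (hs 0 (hp₂.2 0 a))
      intro a; exact Nat.lt_irrefl 0 (hs 0 (hp₁.2 0 a))
    · rw [← mul_left_inj' hi]
      rw [funext_iff] at h
      exact h.2 i
  · simp only [φ, mem_filter, mem_finsuppAntidiag, mem_univ, exists_prop, true_and, and_assoc]
    rintro f ⟨hf, hf₃, hf₄⟩
    have hf' : f ∈ finsuppAntidiag s n := mem_finsuppAntidiag.mpr ⟨hf, hf₃⟩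
    simp only [mem_finsuppAntidiag] at hf'
    refine ⟨⟨∑ i ∈ s, Multiset.replicate (f i / i) i, ?_, ?_⟩, ?_, ?_, ?_⟩
    · intro i hi
      simp only [exists_prop, Multiset.mem_sum, mem_map, Function.Embedding.coeFn_mk] at hi
      rcases hi with ⟨t, ht, z⟩
      apply hs
      rwa [Multiset.eq_of_mem_replicate z]
    · simp_rw [Multiset.sum_sum, Multiset.sum_replicate, Nat.nsmul_eq_mul]
      rw [← hf'.1]
      refine sum_congr rfl fun i hi => Nat.div_mul_cancel ?_
      rcases hf₄ i hi with ⟨w, _, hw₂⟩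
      rw [← hw₂]
      exact dvd_mul_left _ _
    · intro i
      simp_rw [Multiset.count_sum', Multiset.count_replicate, sum_ite_eq']
      split_ifs with h
      · rcases hf₄ i h with ⟨w, hw₁, hw₂⟩
        rwa [← hw₂, Nat.mul_div_cancel _ (hs i h)]
      · exact hc _ h
    · intro i hi
      rw [Multiset.mem_sum] at hi
      rcases hi with ⟨j, hj₁, hj₂⟩
      rwa [Multiset.eq_of_mem_replicate hj₂]
    · ext i
      simp_rw [Multiset.count_sum', Multiset.count_replicate, sum_ite_eq']
      simp only [ne_eq, Multiset.mem_toFinset, not_not, smul_eq_mul, ite_mul,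
        zero_mul, Finsupp.coe_mk]
      split_ifs with h
      · apply Nat.div_mul_cancel
        rcases hf₄ i h with ⟨w, _, hw₂⟩
        apply Dvd.intro_left _ hw₂
      · apply symm
        rw [← Finsupp.notMem_support_iff]
        exact notMem_mono hf'.2 h


def Aset : Set ℕ := {t : ℕ | t ≠ 1 ∧ t ≠ 2 ∧ t ≠ 5}

lemma mem_image_mul {S : Set ℕ} {i m : ℕ} (hi : 0 < i) :
    m * i ∈ (· * i) '' S ↔ m ∈ S := by
  constructor
  · rintro ⟨m', hm', e⟩
    rwa [Nat.eq_of_mul_eq_mul_right hi e] at hm'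
  · exact fun h => ⟨m, h, rfl⟩

theorem keyGF [Field α] (i : ℕ) (hi : 0 < i) :
    indicatorSeries α ((· * i) '' Aset) * ((1 - X ^ (3*i)) * (1 - X ^ (4*i)))
      = 1 - X ^ (12*i) := by
  have expand : indicatorSeries α ((· * i) '' Aset) * ((1 - X ^ (3*i)) * (1 - X ^ (4*i)))
      = indicatorSeries α ((· * i) '' Aset)
        - indicatorSeries α ((· * i) '' Aset) * X ^ (3*i)
        - indicatorSeries α ((· * i) '' Aset) * X ^ (4*i)
        + indicatorSeries α ((· * i) '' Aset) * (X ^ (3*i) * X ^ (4*i)) := by ring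
  have h34 : (X : PowerSeries α) ^ (3*i) * X ^ (4*i) = X ^ (7*i) := by
    rw [← pow_add]; ring_nf
  rw [expand, h34]
  ext k
  simp only [map_add, map_sub, coeff_mul_X_pow', coeff_indicator, coeff_one, coeff_X_pow]
  by_cases hdvd : i ∣ k
  · obtain ⟨m, rfl⟩ := hdvd
    rw [mul_comm i m]
    have e3 : m * i - 3 * i = (m - 3) * i := by rw [Nat.sub_mul]
    have e4 : m * i - 4 * i = (m - 4) * i := by rw [Nat.sub_mul]
    have e7 : m * i - 7 * i = (m - 7) * i := by rw [Nat.sub_mul]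
    have l3 : (3 * i ≤ m * i) = (3 ≤ m) := by
      refine propext ⟨fun h => Nat.le_of_mul_le_mul_right h hi,
        fun h => Nat.mul_le_mul_right i h⟩
    have l4 : (4 * i ≤ m * i) = (4 ≤ m) := by
      refine propext ⟨fun h => Nat.le_of_mul_le_mul_right h hi,
        fun h => Nat.mul_le_mul_right i h⟩
    have l7 : (7 * i ≤ m * i) = (7 ≤ m) := by
      refine propext ⟨fun h => Nat.le_of_mul_le_mul_right h hi,
        fun h => Nat.mul_le_mul_right i h⟩
    have e0 : (m * i = 0) = (m = 0) := by
      refine propext ⟨fun h => ?_, fun h => by simp [h]⟩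
      rcases Nat.mul_eq_zero.mp h with h | h
      · exact h
      · omega
    have e12 : (m * i = 12 * i) = (m = 12) := by
      refine propext ⟨fun h => Nat.eq_of_mul_eq_mul_right hi h, fun h => by rw [h]⟩
    simp only [e3, e4, e7, l3, l4, l7, e0, e12, mem_image_mul hi]
    by_cases h13 : 13 ≤ m
    · have hm : m ∈ Aset := ⟨by omega, by omega, by omega⟩
      have hm3 : m - 3 ∈ Aset := ⟨by omega, by omega, by omega⟩
      have hm4 : m - 4 ∈ Aset := ⟨by omega, by omega, by omega⟩
      have hm7 : m - 7 ∈ Aset := ⟨by omega, by omega, by omega⟩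
      rw [if_pos hm, if_pos (by omega : 3 ≤ m), if_pos hm3,
        if_pos (by omega : 4 ≤ m), if_pos hm4, if_pos (by omega : 7 ≤ m), if_pos hm7,
        if_neg (by omega : ¬ m = 0), if_neg (by omega : ¬ m = 12)]
      ring
    · push_neg at h13
      interval_cases m <;> norm_num [Aset, Set.mem_setOf_eq]
  · have hx : ∀ c : ℕ,
        (if c * i ≤ k then (if k - c * i ∈ (· * i) '' Aset then (1:α) else 0) else 0) = 0 := by
      intro c
      split_ifs with h1 h2
      · exfalso
        obtain ⟨a, -, ha⟩ := h2
        have h1' : k - c * i + c * i = k := Nat.sub_add_cancel h1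
        have ha' : a * i = k - c * i := ha
        exact hdvd ⟨a + c, by rw [Nat.mul_add, Nat.mul_comm i a, Nat.mul_comm i c]; omega⟩
      · rfl
      · rfl
    have hnk : k ∉ (· * i) '' Aset := by
      rintro ⟨m, -, rfl⟩
      exact hdvd (Dvd.intro_left m rfl)
    have h0 : k ≠ 0 := by rintro rfl; exact hdvd (Dvd.intro 0 rfl)
    have h12 : k ≠ 12 * i := by
      rintro rfl
      exact hdvd ⟨12, by ring⟩
    rw [hx 3, hx 4, hx 7, if_neg hnk, if_neg h0, if_neg h12]
    ring

def Bset : Set ℕ := {b : ℕ | b % 12 = 0 ∨ b % 12 = 3 ∨ b % 12 = 4 ∨ b % 12 = 6 ∨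
          b % 12 = 8 ∨ b % 12 = 9}

def sB (n : ℕ) : Finset ℕ :=
  ((Ioc 0 n).image (fun i => 3 * i)) ∪
    (((Ioc 0 n).filter (fun i => ¬ 3 ∣ i)).image (fun i => 4 * i))

lemma parts_le {n : ℕ} (p : Nat.Partition n) {j : ℕ} (hj : j ∈ p.parts) : j ≤ n := by
  simpa [p.parts_sum] using Multiset.single_le_sum (fun _ _ => Nat.zero_le _) _ hj

theorem partP_eq (n : ℕ) :
    (partP Aset n : ℚ) =
      coeff (R := ℚ) n (∏ i ∈ Ioc 0 n, indicatorSeries ℚ ((· * i) '' Aset)) := by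
  rw [← partialGF_prop ℚ n (Ioc 0 n) (fun i hi => (mem_Ioc.mp hi).1) (fun _ => Aset)
    (fun i _ => ⟨by norm_num, by norm_num, by norm_num⟩)]
  norm_cast
  rw [partP]
  congr 1
  apply filter_congr
  intro p _
  constructor
  · intro h
    refine ⟨fun j => ?_, fun j hj => mem_Ioc.mpr ⟨p.parts_pos hj, parts_le p hj⟩⟩
    by_cases hj : j ∈ p.parts
    · exact h j hj
    · rw [Multiset.count_eq_zero_of_notMem hj]
      exact ⟨by norm_num, by norm_num, by norm_num⟩
  · exact fun h j hj => h.1 j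

theorem mem_sB_iff {n j : ℕ} (hj0 : 0 < j) (hjn : j ≤ n) : j ∈ sB n ↔ j ∈ Bset := by
  constructor
  · intro h
    rcases mem_union.mp h with h | h
    · obtain ⟨i, hi, rfl⟩ := mem_image.mp h
      simp only [Bset, Set.mem_setOf_eq]; omega
    · obtain ⟨i, hi, rfl⟩ := mem_image.mp h
      have := (mem_filter.mp hi).2
      simp only [Bset, Set.mem_setOf_eq]; omega
  · intro h
    simp only [Bset, Set.mem_setOf_eq] at h
    by_cases h3 : 3 ∣ j
    · refine mem_union_left _ (mem_image.mpr ⟨j / 3, mem_Ioc.mpr ⟨by omega, by omega⟩, by omega⟩)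
    · refine mem_union_right _ (mem_image.mpr ⟨j / 4,
        mem_filter.mpr ⟨mem_Ioc.mpr ⟨by omega, by omega⟩, by omega⟩, by omega⟩)

theorem partQ_eq (n : ℕ) :
    (partQ Bset n : ℚ) =
      coeff (R := ℚ) n (∏ b ∈ sB n, (1 - (X : PowerSeries ℚ) ^ b)⁻¹) := by
  have hpos : ∀ b ∈ sB n, 0 < b := by
    intro b hb
    rcases mem_union.mp hb with h | h <;> obtain ⟨i, hi, rfl⟩ := mem_image.mp h
    · have := (mem_Ioc.mp hi).1; omega
    · have := (mem_Ioc.mp (mem_filter.mp hi).1).1; omega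
  have hprod : (∏ b ∈ sB n, (1 - (X : PowerSeries ℚ) ^ b)⁻¹) =
      ∏ b ∈ sB n, indicatorSeries ℚ ((· * b) '' Set.univ) := by
    refine prod_congr rfl fun b hb => ?_
    obtain ⟨c, rfl⟩ : ∃ c, b = c + 1 := ⟨b - 1, by have := hpos b hb; omega⟩
    have hset : ((· * (c + 1)) '' Set.univ) = {k : ℕ | c + 1 ∣ k} := by
      ext k
      simp only [Set.mem_setOf_eq, Set.mem_image, Set.mem_univ, true_and]
      constructor
      · rintro ⟨m, rfl⟩; exact ⟨m, mul_comm _ _⟩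
      · rintro ⟨m, rfl⟩; exact ⟨m, mul_comm _ _⟩
    rw [num_series', hset]
  rw [hprod, ← partialGF_prop ℚ n (sB n) hpos (fun _ => Set.univ) (fun _ _ => trivial)]
  norm_cast
  rw [partQ]
  congr 1
  apply filter_congr
  intro p _
  constructor
  · intro h
    exact ⟨fun j => trivial,
      fun j hj => (mem_sB_iff (p.parts_pos hj) (parts_le p hj)).mpr (h j hj)⟩
  · rintro ⟨-, h⟩ j hj
    exact (mem_sB_iff (p.parts_pos hj) (parts_le p hj)).mp (h j hj)

lemma constCoeff_one_sub_X_pow [Field α] {m : ℕ} (hm : 0 < m) :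
    constantCoeff (R := α) (1 - X ^ m) ≠ 0 := by
  rw [map_sub, map_pow, constantCoeff_one, constantCoeff_X, zero_pow hm.ne', sub_zero]
  exact one_ne_zero

theorem mainGF [Field α] (n : ℕ) :
    coeff (R := α) n (∏ i ∈ Ioc 0 n, indicatorSeries α ((· * i) '' Aset)) =
      coeff (R := α) n (∏ b ∈ sB n, (1 - (X : PowerSeries α) ^ b)⁻¹) := by
  set U : PowerSeries α := ∏ i ∈ Ioc 0 n, ((1 - X ^ (3*i)) * (1 - X ^ (4*i))) with hUdef
  set L : PowerSeries α := ∏ i ∈ Ioc 0 n, indicatorSeries α ((· * i) '' Aset) with hLdef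
  set R : PowerSeries α := ∏ b ∈ sB n, (1 - (X : PowerSeries α) ^ b)⁻¹ with hRdef
  set W : PowerSeries α := ∏ i ∈ Ioc (n/3) n, (1 - X ^ (12*i)) with hWdef
  -- L * U
  have hLU : L * U = ∏ i ∈ Ioc 0 n, (1 - (X : PowerSeries α) ^ (12*i)) := by
    rw [hLdef, hUdef, ← prod_mul_distrib]
    exact prod_congr rfl fun i hi => keyGF i (mem_Ioc.mp hi).1
  -- R as two products
  have hdisj : Disjoint ((Ioc 0 n).image (fun i => 3 * i))
      ((((Ioc 0 n).filter (fun i => ¬ 3 ∣ i))).image (fun i => 4 * i)) := by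
    rw [disjoint_left]
    rintro x hx hx'
    simp only [mem_image, mem_filter, mem_Ioc] at hx hx'
    obtain ⟨a, _, rfl⟩ := hx
    obtain ⟨b, ⟨_, hb⟩, hba⟩ := hx'
    exact hb ⟨a - b, by omega⟩
  have hinj3 : Set.InjOn (fun i => 3 * i) (Ioc 0 n) := fun a _ b _ h => by
    simpa using h
  have hinj4 : Set.InjOn (fun i => 4 * i) ((Ioc 0 n).filter (fun i => ¬ 3 ∣ i)) :=
    fun a _ b _ h => by simpa using h
  have hR : R = (∏ i ∈ Ioc 0 n, (1 - (X : PowerSeries α) ^ (3*i))⁻¹) *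
      (∏ i ∈ (Ioc 0 n).filter (fun i => ¬ 3 ∣ i), (1 - (X : PowerSeries α) ^ (4*i))⁻¹) := by
    rw [hRdef, sB, prod_union hdisj, prod_image hinj3, prod_image hinj4]
  -- U as two products
  have hU2 : U = (∏ i ∈ Ioc 0 n, (1 - (X : PowerSeries α) ^ (3*i))) *
      (∏ i ∈ Ioc 0 n, (1 - (X : PowerSeries α) ^ (4*i))) := by
    rw [hUdef, prod_mul_distrib]
  have hsplit4 : (∏ i ∈ Ioc 0 n, (1 - (X : PowerSeries α) ^ (4*i))) =
      (∏ i ∈ (Ioc 0 n).filter (fun i => ¬ 3 ∣ i), (1 - (X : PowerSeries α) ^ (4*i))) *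
      (∏ i ∈ (Ioc 0 n).filter (fun i => 3 ∣ i), (1 - (X : PowerSeries α) ^ (4*i))) := by
    rw [mul_comm]
    exact (prod_filter_mul_prod_filter_not (Ioc 0 n) (fun i => 3 ∣ i) _).symm
  have hfilt : (Ioc 0 n).filter (fun i => 3 ∣ i) = (Ioc 0 (n/3)).image (fun k => 3 * k) := by
    ext x
    simp only [mem_filter, mem_Ioc, mem_image]
    constructor
    · rintro ⟨⟨hx0, hxn⟩, ⟨k, rfl⟩⟩
      exact ⟨k, ⟨by omega, by omega⟩, rfl⟩
    · rintro ⟨k, ⟨hk0, hkn⟩, rfl⟩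
      exact ⟨⟨by omega, by omega⟩, ⟨k, rfl⟩⟩
  have hprod12 : (∏ i ∈ (Ioc 0 n).filter (fun i => 3 ∣ i), (1 - (X : PowerSeries α) ^ (4*i))) =
      ∏ k ∈ Ioc 0 (n/3), (1 - (X : PowerSeries α) ^ (12*k)) := by
    rw [hfilt, prod_image (fun a _ b _ h => by simpa using h)]
    exact prod_congr rfl fun k _ => by norm_num [← mul_assoc]
  -- R * U
  have hRU : R * U = ∏ k ∈ Ioc 0 (n/3), (1 - (X : PowerSeries α) ^ (12*k)) := by
    rw [hR, hU2, hsplit4, ← hprod12]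
    have c3 : (∏ i ∈ Ioc 0 n, (1 - (X : PowerSeries α) ^ (3*i))⁻¹) *
        (∏ i ∈ Ioc 0 n, (1 - (X : PowerSeries α) ^ (3*i))) = 1 := by
      rw [← prod_mul_distrib]
      refine prod_eq_one fun i hi => ?_
      have h0 : (0:ℕ) < 3 * i := by have := (mem_Ioc.mp hi).1; omega
      rw [mul_comm]
      exact PowerSeries.mul_inv_cancel _ (constCoeff_one_sub_X_pow h0)
    have c4 : (∏ i ∈ (Ioc 0 n).filter (fun i => ¬ 3 ∣ i), (1 - (X : PowerSeries α) ^ (4*i))⁻¹) *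
        (∏ i ∈ (Ioc 0 n).filter (fun i => ¬ 3 ∣ i), (1 - (X : PowerSeries α) ^ (4*i))) = 1 := by
      rw [← prod_mul_distrib]
      refine prod_eq_one fun i hi => ?_
      have h0 : (0:ℕ) < 4 * i := by
        have := (mem_Ioc.mp (mem_filter.mp hi).1).1; omega
      rw [mul_comm]
      exact PowerSeries.mul_inv_cancel _ (constCoeff_one_sub_X_pow h0)
    calc (∏ i ∈ Ioc 0 n, (1 - (X : PowerSeries α) ^ (3*i))⁻¹) *
        (∏ i ∈ (Ioc 0 n).filter (fun i => ¬ 3 ∣ i), (1 - (X : PowerSeries α) ^ (4*i))⁻¹) *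
        ((∏ i ∈ Ioc 0 n, (1 - (X : PowerSeries α) ^ (3*i))) *
          ((∏ i ∈ (Ioc 0 n).filter (fun i => ¬ 3 ∣ i), (1 - (X : PowerSeries α) ^ (4*i))) *
           (∏ i ∈ (Ioc 0 n).filter (fun i => 3 ∣ i), (1 - (X : PowerSeries α) ^ (4*i)))))
        = ((∏ i ∈ Ioc 0 n, (1 - (X : PowerSeries α) ^ (3*i))⁻¹) *
            (∏ i ∈ Ioc 0 n, (1 - (X : PowerSeries α) ^ (3*i)))) *
          (((∏ i ∈ (Ioc 0 n).filter (fun i => ¬ 3 ∣ i), (1 - (X : PowerSeries α) ^ (4*i))⁻¹) *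
            (∏ i ∈ (Ioc 0 n).filter (fun i => ¬ 3 ∣ i), (1 - (X : PowerSeries α) ^ (4*i)))) *
           (∏ i ∈ (Ioc 0 n).filter (fun i => 3 ∣ i), (1 - (X : PowerSeries α) ^ (4*i)))) := by
          ring
      _ = _ := by rw [c3, c4, one_mul, one_mul]
  -- combine
  have hLRW : L * U = (R * W) * U := by
    rw [hLU, ← prod_Ioc_consecutive _ (Nat.zero_le (n/3)) (Nat.div_le_self n 3), ← hRU, ← hWdef]
    ring
  have hUne : constantCoeff (R := α) U ≠ 0 := by
    rw [hUdef, map_prod]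
    refine prod_ne_zero_iff.mpr fun i hi => ?_
    have h0 : 0 < i := (mem_Ioc.mp hi).1
    rw [map_mul]
    exact mul_ne_zero (constCoeff_one_sub_X_pow (by omega))
      (constCoeff_one_sub_X_pow (by omega))
  have hUu : U * U⁻¹ = 1 := PowerSeries.mul_inv_cancel _ hUne
  have hLR : L = R * W := by
    calc L = L * (U * U⁻¹) := by rw [hUu, mul_one]
      _ = (L * U) * U⁻¹ := by ring
      _ = ((R * W) * U) * U⁻¹ := by rw [hLRW]
      _ = (R * W) * (U * U⁻¹) := by ring
      _ = R * W := by rw [hUu, mul_one]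
  rw [hLR, hWdef]
  apply coeff_mul_prod_one_sub_of_lt_order
  intro i hi
  rw [order_X_pow]
  have := (mem_Ioc.mp hi).1
  exact_mod_cast (by omega : n < 12 * i)

end

end MacMahonAux

/-- MacMahon-type example: multiplicities avoiding {1,2,5} vs parts ≡ 0,3,4,6,8,9 mod 12. -/
theorem macmahon_type_example (n : ℕ) :
    partP {t : ℕ | t ≠ 1 ∧ t ≠ 2 ∧ t ≠ 5} n
      = partQ {b : ℕ | b % 12 = 0 ∨ b % 12 = 3 ∨ b % 12 = 4 ∨ b % 12 = 6 ∨
          b % 12 = 8 ∨ b % 12 = 9} n := by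
  have h : (partP MacMahonAux.Aset n : ℚ) = (partQ MacMahonAux.Bset n : ℚ) := by
    rw [MacMahonAux.partP_eq, MacMahonAux.partQ_eq]
    exact MacMahonAux.mainGF n
  exact_mod_cast h
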